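/- arXiv:2304.10940 — 10 statements merged into one kernel-verified Lean document; each statement's English description precedes it below -/
import Mathlib

section
/- If a PB rule F is the MLE of some noise model M for an instance I — that is, for every profile A over I, F(I,A) equals the set of feasible budget allocations π maximizing the likelihood L_M(A,π) — then F satisfies weak reinforcement on I. Consequently, a PB rule that fails weak reinforcement is not the MLE of any noise model. -/
/-- If a PB rule `F` is the MLE of some noise model `M` for an instance
`I = ⟨P, c, b⟩` — i.e. for every profile `A`, `F A` is the set of feasible
budget allocations maximizing the likelihood — then `F` satisfies weak
reinforcement. -/
theorem mle_implies_weak_reinforcement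
    {P : Type*} [Fintype P] [DecidableEq P]
    (c : P → ℕ) (b : ℕ)
    (F : List (Finset P) → Set (Finset P))
    (M : Finset P → Finset P → ℝ)
    (hM_nonneg : ∀ π : Finset P, ∑ p ∈ π, c p ≤ b → ∀ A : Finset P, 0 ≤ M A π)
    (hM_sum : ∀ π : Finset P, ∑ p ∈ π, c p ≤ b → ∑ A : Finset P, M A π = 1)
    (hMLE : ∀ A : List (Finset P),
      F A = {π : Finset P | ∑ p ∈ π, c p ≤ b ∧
        ∀ π' : Finset P, ∑ p ∈ π', c p ≤ b →
          (A.map (fun Ai => M Ai π')).prod ≤ (A.map (fun Ai => M Ai π)).prod}) :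
    ∀ A A' : List (Finset P), F A = F A' → F (A ++ A') = F A := by
  intro A A' hAA'
  set L : List (Finset P) → Finset P → ℝ :=
    fun B π => (B.map (fun Ai => M Ai π)).prod with hLdef
  have hLnn : ∀ (B : List (Finset P)) (π : Finset P), (∑ p ∈ π, c p ≤ b) → 0 ≤ L B π := by
    intro B π hπ
    apply List.prod_nonneg
    intro x hx
    simp only [List.mem_map] at hx
    obtain ⟨a, _, rfl⟩ := hx
    exact hM_nonneg π hπ a
  have hsplit : ∀ π, L (A ++ A') π = L A π * L A' π := by
    intro π; simp [hLdef, List.map_append, List.prod_append]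
  -- existence of a maximizer for profile A
  have hne : ∃ π₀, π₀ ∈ F A := by
    obtain ⟨π₀, hmem, hmax⟩ := Finset.exists_max_image
      (Finset.univ.filter (fun π : Finset P => ∑ p ∈ π, c p ≤ b)) (L A)
      ⟨∅, by simp⟩
    refine ⟨π₀, ?_⟩
    rw [hMLE]
    simp only [Finset.mem_filter, Finset.mem_univ, true_and] at hmem
    refine ⟨hmem, fun π' hπ' => hmax π' ?_⟩
    simp [hπ']
  obtain ⟨π₀, hπ₀⟩ := hne
  have hπ₀A := hπ₀
  have hπ₀A' : π₀ ∈ F A' := hAA' ▸ hπ₀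
  rw [hMLE] at hπ₀A hπ₀A'
  obtain ⟨hfeas₀, hmaxA⟩ := hπ₀A
  obtain ⟨-, hmaxA'⟩ := hπ₀A'
  have key : F A = {π : Finset P | ∑ p ∈ π, c p ≤ b ∧
      ∀ π' : Finset P, ∑ p ∈ π', c p ≤ b → L A π' ≤ L A π} := hMLE A
  ext π
  rw [hMLE (A ++ A'), key]
  simp only [Set.mem_setOf_eq]
  constructor
  · rintro ⟨hfeas, hmax⟩
    refine ⟨hfeas, fun π' hπ' => ?_⟩
    rcases eq_or_lt_of_le (hLnn A' π₀ hfeas₀) with hz | hpos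
    · -- L A' π₀ = 0 : every feasible allocation is in F A' = F A
      have hπFA' : π ∈ F A' := by
        rw [hMLE]
        refine ⟨hfeas, fun π'' hπ'' => ?_⟩
        calc L A' π'' ≤ L A' π₀ := hmaxA' π'' hπ''
          _ = 0 := hz.symm
          _ ≤ L A' π := hLnn A' π hfeas
      have hπFA : π ∈ F A := hAA' ▸ hπFA'
      rw [key] at hπFA
      exact hπFA.2 π' hπ'
    · -- L A' π₀ > 0
      rcases eq_or_lt_of_le (hLnn A π₀ hfeas₀) with hz0 | hpos0
      · calc L A π' ≤ L A π₀ := hmaxA π' hπ'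
          _ = 0 := hz0.symm
          _ ≤ L A π := hLnn A π hfeas
      · have h1 : L A π₀ * L A' π₀ ≤ L A π * L A' π := by
          have h0 : L (A ++ A') π₀ ≤ L (A ++ A') π := hmax π₀ hfeas₀
          rwa [hsplit, hsplit] at h0
        have h2 : L A π * L A' π ≤ L A π * L A' π₀ :=
          mul_le_mul_of_nonneg_left (hmaxA' π hfeas) (hLnn A π hfeas)
        have h3 : L A π₀ ≤ L A π :=
          le_of_mul_le_mul_right (h1.trans h2) hpos
        exact (hmaxA π' hπ').trans h3
  · rintro ⟨hfeas, hmaxπ⟩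
    have hπFA : π ∈ F A := by rw [key]; exact ⟨hfeas, hmaxπ⟩
    have hπFA' : π ∈ F A' := hAA' ▸ hπFA
    rw [hMLE] at hπFA'
    obtain ⟨-, hmaxπ'⟩ := hπFA'
    refine ⟨hfeas, fun π' hπ' => ?_⟩
    show L (A ++ A') π' ≤ L (A ++ A') π
    rw [hsplit, hsplit]
    exact mul_le_mul (hmaxπ π' hπ') (hmaxπ' π' hπ') (hLnn A' π' hπ') (hLnn A π hfeas)
end

section
/- Every monotonic argmax PB rule satisfies weak reinforcement: if F is defined by F(I,A) = argmax_{π feasible} f(I,A,π) for a score function f satisfying the two monotonicity conditions, then for all profiles A, A' with F(I,A) = F(I,A') one has F(I, A ++ A') = F(I,A). -/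
/-- Every monotonic argmax PB rule satisfies weak reinforcement. -/
theorem monotonic_argmax_weak_reinforcement
    {P : Type*} [Fintype P] [DecidableEq P]
    (c : P → ℕ) (b : ℕ)
    (f : List (Finset P) → Finset P → ℝ)
    (F : List (Finset P) → Set (Finset P))
    (hF : ∀ A : List (Finset P),
      F A = {π : Finset P | ∑ p ∈ π, c p ≤ b ∧
        ∀ π' : Finset P, ∑ p ∈ π', c p ≤ b → f A π' ≤ f A π})
    (hmono1 : ∀ (A A' : List (Finset P)) (π π' : Finset P),
      ∑ p ∈ π, c p ≤ b → ∑ p ∈ π', c p ≤ b →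
      f A π < f A π' → f A' π < f A' π' → f (A ++ A') π < f (A ++ A') π')
    (hmono2 : ∀ (A A' : List (Finset P)) (π π' : Finset P),
      ∑ p ∈ π, c p ≤ b → ∑ p ∈ π', c p ≤ b →
      f A π = f A π' → f A' π = f A' π' → f (A ++ A') π = f (A ++ A') π') :
    ∀ A A' : List (Finset P), F A = F A' → F (A ++ A') = F A := by
  intro A A' hAA'
  -- membership characterization
  have mem : ∀ (B : List (Finset P)) (π : Finset P),
      π ∈ F B ↔ (∑ p ∈ π, c p ≤ b ∧
        ∀ π' : Finset P, ∑ p ∈ π', c p ≤ b → f B π' ≤ f B π) := by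
    intro B π; rw [hF B]; rfl
  -- key: for π ∈ F A and feasible π', both comparisons strict or both equal
  have key : ∀ π ∈ F A, ∀ π' : Finset P, ∑ p ∈ π', c p ≤ b →
      (f A π' < f A π ∧ f A' π' < f A' π) ∨ (f A π' = f A π ∧ f A' π' = f A' π) := by
    intro π hπ π' hπ'
    have hπA := (mem A π).1 hπ
    have hπA' := (mem A' π).1 (hAA' ▸ hπ)
    have h1 : f A π' ≤ f A π := hπA.2 π' hπ'
    have h2 : f A' π' ≤ f A' π := hπA'.2 π' hπ'
    rcases lt_or_eq_of_le h1 with h1 | h1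
    · rcases lt_or_eq_of_le h2 with h2 | h2
      · exact Or.inl ⟨h1, h2⟩
      · -- π' maximizes f A', so π' ∈ F A' = F A, contradicting h1
        have hπ'A' : π' ∈ F A' := (mem A' π').2
          ⟨hπ', fun π'' hπ'' => h2 ▸ hπA'.2 π'' hπ''⟩
        have := ((mem A π').1 (hAA' ▸ hπ'A')).2 π hπA.1
        exact absurd h1 (not_lt.2 this)
    · -- π' maximizes f A, so π' ∈ F A = F A'
      have hπ'A : π' ∈ F A := (mem A π').2
        ⟨hπ', fun π'' hπ'' => h1 ▸ hπA.2 π'' hπ''⟩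
      have h2' := ((mem A' π').1 (hAA' ▸ hπ'A)).2 π hπA'.1
      exact Or.inr ⟨h1, le_antisymm h2 h2'⟩
  -- F A is nonempty
  obtain ⟨π₀, hπ₀s, hπ₀max⟩ :=
    Finset.exists_max_image (Finset.univ.filter (fun π : Finset P => ∑ p ∈ π, c p ≤ b))
      (f A) ⟨∅, by simp⟩
  have hπ₀feas : ∑ p ∈ π₀, c p ≤ b := (Finset.mem_filter.1 hπ₀s).2
  have hπ₀ : π₀ ∈ F A := (mem A π₀).2
    ⟨hπ₀feas, fun π' hπ' => hπ₀max π' (Finset.mem_filter.2 ⟨Finset.mem_univ _, hπ'⟩)⟩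
  have elem : ∀ π ∈ F A, π ∈ F (A ++ A') := by
    intro π hπ
    have hπfeas := ((mem A π).1 hπ).1
    refine (mem _ π).2 ⟨hπfeas, fun π' hπ' => ?_⟩
    rcases key π hπ π' hπ' with ⟨h1, h2⟩ | ⟨h1, h2⟩
    · exact le_of_lt (hmono1 A A' π' π hπ' hπfeas h1 h2)
    · exact le_of_eq (hmono2 A A' π' π hπ' hπfeas h1 h2)
  apply Set.eq_of_subset_of_subset
  · intro π hπ
    have hπfeas := ((mem _ π).1 hπ).1
    have hle : f (A ++ A') π₀ ≤ f (A ++ A') π := ((mem _ π).1 hπ).2 π₀ hπ₀feas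
    rcases key π₀ hπ₀ π hπfeas with ⟨h1, h2⟩ | ⟨h1, _⟩
    · exact absurd (hmono1 A A' π π₀ hπfeas hπ₀feas h1 h2) (not_lt.2 hle)
    · exact (mem A π).2 ⟨hπfeas,
        fun π'' hπ'' => h1 ▸ ((mem A π₀).1 hπ₀).2 π'' hπ''⟩
  · exact elem
end

section
/- The rule F̃^N_cost is the MLE of the noise model N_Ncost: let I = ⟨P, c, b⟩ be a PB instance with P nonempty and c(p) ≥ 1 for all p ∈ P, and for each nonempty feasible allocation π define ℙ(A | π) = c(A ∩ π) / (2^{|P|−1} · c(π)) for every ballot A ⊆ P. Then (i) for each nonempty feasible π, the values ℙ(A | π) over all A ⊆ P are nonnegative and sum to 1, and (ii) for every profile A = (A_1, …, A_n), the set of nonempty feasible allocations π maximizing the likelihood ∏_{i=1}^n ℙ(A_i | π) equals the set of nonempty feasible allocations maximizing ∏_{i=1}^n c(A_i ∩ π) / c(π). -/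
/-- The rule `F̃^N_cost` is the MLE of the noise model `N_Ncost`:
with `ℙ(A | π) = c(A ∩ π) / (2 ^ (|P| - 1) * c(π))` for nonempty feasible `π`,
(i) `ℙ(· | π)` is a probability distribution over ballots, and
(ii) maximizing the likelihood over nonempty feasible allocations is the same as
maximizing `∏_i c(Aᵢ ∩ π) / c(π)`. -/
theorem nash_cost_relative_is_MLE
    {P : Type*} [Fintype P] [DecidableEq P] [Nonempty P]
    (c : P → ℕ) (hc : ∀ p, 1 ≤ c p) (b : ℕ)
    (Pr : Finset P → Finset P → ℝ)
    (hPr : ∀ A π : Finset P,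
      Pr A π = (∑ p ∈ A ∩ π, c p : ℝ) / (2 ^ (Fintype.card P - 1) * ∑ p ∈ π, c p)) :
    (∀ π : Finset P, π.Nonempty → ∑ p ∈ π, c p ≤ b →
      (∀ A : Finset P, 0 ≤ Pr A π) ∧ ∑ A : Finset P, Pr A π = 1) ∧
    (∀ A : List (Finset P),
      {π : Finset P | π.Nonempty ∧ ∑ p ∈ π, c p ≤ b ∧
        ∀ π' : Finset P, π'.Nonempty → ∑ p ∈ π', c p ≤ b →
          (A.map (fun Ai => Pr Ai π')).prod ≤ (A.map (fun Ai => Pr Ai π)).prod}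
      =
      {π : Finset P | π.Nonempty ∧ ∑ p ∈ π, c p ≤ b ∧
        ∀ π' : Finset P, π'.Nonempty → ∑ p ∈ π', c p ≤ b →
          (A.map (fun Ai => (∑ p ∈ Ai ∩ π', c p : ℝ) / (∑ p ∈ π', c p : ℝ))).prod ≤
          (A.map (fun Ai => (∑ p ∈ Ai ∩ π, c p : ℝ) / (∑ p ∈ π, c p : ℝ))).prod}) := by
  have hk : 1 ≤ Fintype.card P := Fintype.card_pos
  have hcpos : ∀ π : Finset P, π.Nonempty → (0:ℝ) < ∑ p ∈ π, (c p : ℝ) := by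
    intro π hπ
    obtain ⟨p, hp⟩ := hπ
    have h1 : (1:ℝ) ≤ (c p : ℝ) := by exact_mod_cast hc p
    have h2 : (c p : ℝ) ≤ ∑ q ∈ π, (c q : ℝ) :=
      Finset.single_le_sum (f := fun q => (c q : ℝ)) (fun q _ => by positivity) hp
    linarith
  constructor
  · intro π hπ hb
    have hcπ := hcpos π hπ
    refine ⟨fun A => by rw [hPr]; positivity, ?_⟩
    have hcompl : ∀ A : Finset P,
        (∑ p ∈ A ∩ π, (c p:ℝ)) + (∑ p ∈ Aᶜ ∩ π, (c p:ℝ)) = ∑ p ∈ π, (c p:ℝ) := by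
      intro A
      rw [← Finset.sum_union]
      · congr 1
        ext q
        simp only [Finset.mem_union, Finset.mem_inter, Finset.mem_compl]
        tauto
      · rw [Finset.disjoint_left]
        intro q hq hq'
        simp only [Finset.mem_inter, Finset.mem_compl] at hq hq'
        exact hq'.1 hq.1
    have hsymm : ∑ A : Finset P, (∑ p ∈ A ∩ π, (c p:ℝ))
        = ∑ A : Finset P, (∑ p ∈ Aᶜ ∩ π, (c p:ℝ)) := by
      refine Fintype.sum_bijective compl (Function.Involutive.bijective compl_compl) _ _ ?_
      intro A
      simp
    have htwo : 2 * ∑ A : Finset P, (∑ p ∈ A ∩ π, (c p:ℝ))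
        = 2 ^ Fintype.card P * ∑ p ∈ π, (c p:ℝ) := by
      have := Finset.sum_add_distrib (s := (Finset.univ : Finset (Finset P)))
        (f := fun A => ∑ p ∈ A ∩ π, (c p:ℝ)) (g := fun A => ∑ p ∈ Aᶜ ∩ π, (c p:ℝ))
      rw [← hsymm] at this
      have hsum : ∑ A : Finset P, ((∑ p ∈ A ∩ π, (c p:ℝ)) + (∑ p ∈ Aᶜ ∩ π, (c p:ℝ)))
          = ∑ A : Finset P, (∑ p ∈ π, (c p:ℝ)) := by
        exact Finset.sum_congr rfl (fun A _ => hcompl A)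
      rw [hsum] at this
      rw [Finset.sum_const, Finset.card_univ, Fintype.card_finset, nsmul_eq_mul] at this
      push_cast at this ⊢
      linarith
    have key : ∑ A : Finset P, (∑ p ∈ A ∩ π, (c p:ℝ))
        = 2 ^ (Fintype.card P - 1) * ∑ p ∈ π, (c p:ℝ) := by
      have hpow : (2:ℝ) ^ Fintype.card P = 2 * 2 ^ (Fintype.card P - 1) := by
        rw [← pow_succ']
        congr 1
        omega
      rw [hpow] at htwo
      linarith
    simp_rw [hPr, Nat.cast_sum]
    rw [← Finset.sum_div, key, div_self]
    positivity
  · intro A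
    have hprod : ∀ π : Finset P, (A.map (fun Ai => Pr Ai π)).prod
        = ((2:ℝ) ^ (Fintype.card P - 1))⁻¹ ^ A.length *
          (A.map (fun Ai => (∑ p ∈ Ai ∩ π, (c p:ℝ)) / (∑ p ∈ π, (c p:ℝ)))).prod := by
      intro π
      induction A with
      | nil => simp
      | cons a t ih =>
        rw [List.map_cons, List.prod_cons, List.map_cons, List.prod_cons, ih,
          List.length_cons, hPr, Nat.cast_sum, pow_succ, div_mul_eq_div_div_swap,
          div_eq_inv_mul]
        ring
    have hC : (0:ℝ) < ((2:ℝ) ^ (Fintype.card P - 1))⁻¹ ^ A.length := by positivity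
    ext π
    simp only [Set.mem_setOf_eq]
    constructor <;> rintro ⟨h1, h2, h3⟩ <;> refine ⟨h1, h2, fun π' hn hb' => ?_⟩
    · have h := h3 π' hn hb'
      rw [hprod π, hprod π'] at h
      exact le_of_mul_le_mul_left h hC
    · rw [hprod π, hprod π']
      exact mul_le_mul_of_nonneg_left (h3 π' hn hb') hC.le
end

section
/- The rule F̃^N_app is the MLE of the noise model N_Napp: let I = ⟨P, c, b⟩ be a PB instance with P nonempty, and for each nonempty feasible allocation π define ℙ(A | π) = |A ∩ π| / (2^{|P|−1} · |π|) for every ballot A ⊆ P. Then (i) for each nonempty feasible π, the values ℙ(A | π) over all A ⊆ P are nonnegative and sum to 1, and (ii) for every profile A = (A_1, …, A_n), the set of nonempty feasible allocations π maximizing the likelihood ∏_{i=1}^n ℙ(A_i | π) equals the set of nonempty feasible allocations maximizing ∏_{i=1}^n |A_i ∩ π| / |π|. -/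
lemma filter_mem_card {P : Type*} [Fintype P] [DecidableEq P] [Nonempty P] (p : P) :
    (Finset.univ.filter fun A : Finset P => p ∈ A).card = 2 ^ (Fintype.card P - 1) := by
  have hbij : (Finset.univ.filter fun A : Finset P => p ∈ A).card
      = (Finset.univ.filter fun A : Finset P => ¬ p ∈ A).card := by
    refine Finset.card_bij' (fun A _ => A.erase p) (fun A _ => insert p A) ?_ ?_ ?_ ?_
    · intro A hA; simp [Finset.mem_erase]
    · intro A hA; simp
    · intro A hA
      simp only [Finset.mem_filter] at hA
      exact Finset.insert_erase hA.2
    · intro A hA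
      simp only [Finset.mem_filter] at hA
      exact Finset.erase_insert hA.2
  have hsum : (Finset.univ.filter fun A : Finset P => p ∈ A).card
      + (Finset.univ.filter fun A : Finset P => ¬ p ∈ A).card = 2 ^ Fintype.card P := by
    rw [Finset.card_filter_add_card_filter_not]
    simp [Fintype.card_finset]
  have hpos : 0 < Fintype.card P := Fintype.card_pos
  have h2 : 2 ^ Fintype.card P = 2 * 2 ^ (Fintype.card P - 1) := by
    rw [← pow_succ']
    congr 1
    omega
  omega

lemma sum_inter_card {P : Type*} [Fintype P] [DecidableEq P] [Nonempty P] (π : Finset P) :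
    ∑ A : Finset P, (A ∩ π).card = 2 ^ (Fintype.card P - 1) * π.card := by
  have h1 : ∀ A : Finset P, (A ∩ π).card = ∑ p ∈ π, if p ∈ A then 1 else 0 := by
    intro A
    rw [← Finset.card_filter]
    congr 1
    rw [Finset.inter_comm]
    ext x; simp [Finset.mem_filter, and_comm]
  simp_rw [h1]
  rw [Finset.sum_comm]
  have h2 : ∀ p : P, (∑ A : Finset P, if p ∈ A then 1 else 0) = 2 ^ (Fintype.card P - 1) := by
    intro p
    rw [← Finset.card_filter]
    exact filter_mem_card p
  rw [Finset.sum_congr rfl fun p _ => h2 p]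
  simp [mul_comm]

/-- The rule `F̃^N_app` is the MLE of the noise model `N_Napp`:
with `ℙ(A | π) = |A ∩ π| / (2 ^ (|P| - 1) * |π|)` for nonempty feasible `π`,
(i) `ℙ(· | π)` is a probability distribution over ballots, and
(ii) maximizing the likelihood over nonempty feasible allocations is the same as
maximizing `∏_i |Aᵢ ∩ π| / |π|`. -/
theorem nash_app_relative_is_MLE
    {P : Type*} [Fintype P] [DecidableEq P] [Nonempty P]
    (c : P → ℕ) (b : ℕ)
    (Pr : Finset P → Finset P → ℝ)
    (hPr : ∀ A π : Finset P,
      Pr A π = ((A ∩ π).card : ℝ) / (2 ^ (Fintype.card P - 1) * π.card)) :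
    (∀ π : Finset P, π.Nonempty → ∑ p ∈ π, c p ≤ b →
      (∀ A : Finset P, 0 ≤ Pr A π) ∧ ∑ A : Finset P, Pr A π = 1) ∧
    (∀ A : List (Finset P),
      {π : Finset P | π.Nonempty ∧ ∑ p ∈ π, c p ≤ b ∧
        ∀ π' : Finset P, π'.Nonempty → ∑ p ∈ π', c p ≤ b →
          (A.map (fun Ai => Pr Ai π')).prod ≤ (A.map (fun Ai => Pr Ai π)).prod}
      =
      {π : Finset P | π.Nonempty ∧ ∑ p ∈ π, c p ≤ b ∧
        ∀ π' : Finset P, π'.Nonempty → ∑ p ∈ π', c p ≤ b →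
          (A.map (fun Ai => ((Ai ∩ π').card : ℝ) / (π'.card : ℝ))).prod ≤
          (A.map (fun Ai => ((Ai ∩ π).card : ℝ) / (π.card : ℝ))).prod}) := by
  set k : ℝ := 2 ^ (Fintype.card P - 1) with hk
  have hkpos : 0 < k := by positivity
  -- product relation
  have hprod : ∀ (π : Finset P), π.Nonempty → ∀ (L : List (Finset P)),
      (L.map (fun Ai => Pr Ai π)).prod
        = (L.map (fun Ai => ((Ai ∩ π).card : ℝ) / (π.card : ℝ))).prod * (k⁻¹) ^ L.length := by
    intro π hπ L
    induction L with
    | nil => simp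
    | cons a L ih =>
      have hc : (π.card : ℝ) ≠ 0 := by
        have := Finset.card_pos.mpr hπ
        positivity
      simp only [List.map_cons, List.prod_cons, List.length_cons]
      rw [ih, hPr a π, mul_comm k (π.card : ℝ), ← div_div, div_eq_mul_inv _ k, pow_succ]
      ring
  constructor
  · intro π hπ _
    refine ⟨fun A => by rw [hPr]; positivity, ?_⟩
    have hc : (0:ℝ) < (π.card : ℝ) := by exact_mod_cast Finset.card_pos.mpr hπ
    have hsum : (∑ A : Finset P, ((A ∩ π).card : ℝ)) = k * π.card := by
      rw [← Nat.cast_sum]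
      rw [sum_inter_card π]
      push_cast [hk]
      ring
    simp_rw [hPr]
    rw [← Finset.sum_div, hsum, div_self (by positivity)]
  · intro A
    ext π
    simp only [Set.mem_setOf_eq]
    have key : ∀ π₁ π₂ : Finset P, π₁.Nonempty → π₂.Nonempty →
        (((A.map (fun Ai => Pr Ai π₁)).prod ≤ (A.map (fun Ai => Pr Ai π₂)).prod) ↔
         ((A.map (fun Ai => ((Ai ∩ π₁).card : ℝ) / (π₁.card : ℝ))).prod ≤
          (A.map (fun Ai => ((Ai ∩ π₂).card : ℝ) / (π₂.card : ℝ))).prod)) := by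
      intro π₁ π₂ h1 h2
      rw [hprod π₁ h1 A, hprod π₂ h2 A]
      exact mul_le_mul_iff_of_pos_right (by positivity)
    constructor
    · rintro ⟨h1, h2, h3⟩
      exact ⟨h1, h2, fun π' h h' => (key π' π h h1).mp (h3 π' h h')⟩
    · rintro ⟨h1, h2, h3⟩
      exact ⟨h1, h2, fun π' h h' => (key π' π h h1).mpr (h3 π' h h')⟩
end

section
/- There is no noise model for which the Nash approval-maximising rule F^N_app is the MLE, even on unit-cost instances: let I be the instance with project set P = {p1, p2}, c(p1) = c(p2) = 1, and budget b = 2 (so every subset of P is feasible), and let F^N_app(I, A) = argmax_{π ⊆ P} ∏_{i} |A_i ∩ π| for every profile A = (A_1, …, A_n). Then there is no family (ℙ(·|π))_{π ⊆ P} of probability distributions over subsets of P such that for every profile A, argmax_{π ⊆ P} ∏_i ℙ(A_i | π) = F^N_app(I, A). -/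
/-- There is no noise model for which the Nash approval-maximising rule
`F^N_app` is the MLE, even on unit-cost instances: on the instance with two
unit-cost projects and budget 2 (every subset is feasible), no family of
probability distributions `ℙ(·|π)` satisfies that for every profile the set of
likelihood maximizers equals the set of maximizers of `∏_i |Aᵢ ∩ π|`. -/
theorem nash_app_not_MLE :
    ¬ ∃ Pr : Finset (Fin 2) → Finset (Fin 2) → ℝ,
      (∀ π : Finset (Fin 2),
        (∀ A : Finset (Fin 2), 0 ≤ Pr A π) ∧ ∑ A : Finset (Fin 2), Pr A π = 1) ∧
      (∀ A : List (Finset (Fin 2)),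
        {π : Finset (Fin 2) | ∀ π' : Finset (Fin 2),
          (A.map (fun Ai => Pr Ai π')).prod ≤ (A.map (fun Ai => Pr Ai π)).prod}
        =
        {π : Finset (Fin 2) | ∀ π' : Finset (Fin 2),
          (A.map (fun Ai => (Ai ∩ π').card)).prod ≤
          (A.map (fun Ai => (Ai ∩ π).card)).prod}) := by
  rintro ⟨Pr, hPr, hMLE⟩
  -- If `univ` is a Nash maximizer for the single-ballot profile [Ai], then
  -- Pr Ai π' ≤ Pr Ai univ for every π'.
  have hle : ∀ Ai : Finset (Fin 2),
      (∀ π' : Finset (Fin 2), (Ai ∩ π').card ≤ (Ai ∩ (Finset.univ : Finset (Fin 2))).card) →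
      ∀ π' : Finset (Fin 2), Pr Ai π' ≤ Pr Ai Finset.univ := by
    intro Ai h π'
    have h1 : (Finset.univ : Finset (Fin 2)) ∈
        {π : Finset (Fin 2) | ∀ π' : Finset (Fin 2),
          (([Ai]).map (fun A => (A ∩ π').card)).prod ≤
          (([Ai]).map (fun A => (A ∩ π).card)).prod} := by
      simpa using h
    rw [← hMLE [Ai]] at h1
    simpa using h1 π'
  -- If in addition `{0}` is not a Nash maximizer for [Ai], the inequality is strict.
  have hlt : ∀ Ai : Finset (Fin 2),
      (∀ π' : Finset (Fin 2), (Ai ∩ π').card ≤ (Ai ∩ (Finset.univ : Finset (Fin 2))).card) →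
      ¬(∀ π' : Finset (Fin 2), (Ai ∩ π').card ≤ (Ai ∩ ({0} : Finset (Fin 2))).card) →
      Pr Ai {0} < Pr Ai Finset.univ := by
    intro Ai hmax hnot
    have h1 : ∀ π', Pr Ai π' ≤ Pr Ai Finset.univ := hle Ai hmax
    have h2 : ({0} : Finset (Fin 2)) ∉
        {π : Finset (Fin 2) | ∀ π' : Finset (Fin 2),
          (([Ai]).map (fun A => Pr A π')).prod ≤
          (([Ai]).map (fun A => Pr A π)).prod} := by
      rw [hMLE [Ai]]
      simpa using hnot
    simp only [Set.mem_setOf_eq, not_forall, not_le, List.map_cons, List.map_nil,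
      List.prod_cons, List.prod_nil, mul_one] at h2
    obtain ⟨π', h⟩ := h2
    exact lt_of_lt_of_le h (h1 π')
  have hsum : (∑ A : Finset (Fin 2), Pr A {0}) < ∑ A : Finset (Fin 2), Pr A Finset.univ := by
    apply Finset.sum_lt_sum
    · intro A _
      have hcases : A = ∅ ∨ A = {0} ∨ A = {1} ∨ A = Finset.univ := by
        revert A; decide
      rcases hcases with rfl | rfl | rfl | rfl
      · exact hle ∅ (by decide) {0}
      · exact hle {0} (by decide) {0}
      · exact le_of_lt (hlt {1} (by decide) (by decide))
      · exact hle Finset.univ (by decide) {0}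
    · exact ⟨{1}, Finset.mem_univ _, hlt {1} (by decide) (by decide)⟩
  rw [(hPr {0}).2, (hPr Finset.univ).2] at hsum
  exact lt_irrefl 1 hsum
end

section
/- There is no noise model for which the utilitarian approval-maximising rule F_app is the MLE, even on unit-cost instances: let I be the instance with project set P = {p1, p2}, c(p1) = c(p2) = 1, and budget b = 2 (so every subset of P is feasible), and let F_app(I, A) = argmax_{π ⊆ P} ∑_{i} |A_i ∩ π| for every profile A = (A_1, …, A_n). Then there is no family (ℙ(·|π))_{π ⊆ P} of probability distributions over subsets of P such that for every profile A, argmax_{π ⊆ P} ∏_i ℙ(A_i | π) = F_app(I, A). -/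
/-- There is no noise model for which the utilitarian approval-maximising rule
`F_app` is the MLE, even on unit-cost instances: on the instance with two
unit-cost projects and budget 2 (every subset is feasible), no family of
probability distributions `ℙ(·|π)` satisfies that for every profile the set of
likelihood maximizers equals the set of maximizers of `∑_i |Aᵢ ∩ π|`. -/
theorem app_max_not_MLE :
    ¬ ∃ Pr : Finset (Fin 2) → Finset (Fin 2) → ℝ,
      (∀ π : Finset (Fin 2),
        (∀ A : Finset (Fin 2), 0 ≤ Pr A π) ∧ ∑ A : Finset (Fin 2), Pr A π = 1) ∧
      (∀ A : List (Finset (Fin 2)),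
        {π : Finset (Fin 2) | ∀ π' : Finset (Fin 2),
          (A.map (fun Ai => Pr Ai π')).prod ≤ (A.map (fun Ai => Pr Ai π)).prod}
        =
        {π : Finset (Fin 2) | ∀ π' : Finset (Fin 2),
          (A.map (fun Ai => (Ai ∩ π').card)).sum ≤
          (A.map (fun Ai => (Ai ∩ π).card)).sum}) := by
  rintro ⟨Pr, hprob, hmle⟩
  have key : ∀ (S π : Finset (Fin 2)),
      (∀ π', Pr S π' ≤ Pr S π) ↔
      (∀ π', (S ∩ π').card ≤ (S ∩ π).card) := by
    intro S π
    have := Set.ext_iff.mp (hmle [S]) π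
    simpa using this
  have h0a : ∀ π', Pr {0} π' ≤ Pr {0} {0} := (key {0} {0}).mpr (by decide)
  have h0b : ∀ π', Pr {0} π' ≤ Pr {0} Finset.univ :=
    (key {0} Finset.univ).mpr (by decide)
  have h1b : ∀ π', Pr {1} π' ≤ Pr {1} Finset.univ :=
    (key {1} Finset.univ).mpr (by decide)
  have h1s : ¬ (∀ π', Pr {1} π' ≤ Pr {1} {0}) := by
    intro h; exact absurd ((key {1} {0}).mp h) (by decide)
  have h2b : ∀ π', Pr Finset.univ π' ≤ Pr Finset.univ Finset.univ :=
    (key Finset.univ Finset.univ).mpr (by decide)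
  have h2s : ¬ (∀ π', Pr Finset.univ π' ≤ Pr Finset.univ {0}) := by
    intro h; exact absurd ((key Finset.univ {0}).mp h) (by decide)
  have he0 : ∀ π', Pr ∅ π' ≤ Pr ∅ {0} := (key ∅ {0}).mpr (by decide)
  have he1 : ∀ π', Pr ∅ π' ≤ Pr ∅ Finset.univ := (key ∅ Finset.univ).mpr (by decide)
  have hy : Pr {1} {0} < Pr {1} Finset.univ := by
    by_contra h; push_neg at h
    exact h1s (fun π' => le_trans (h1b π') h)
  have hz : Pr Finset.univ {0} < Pr Finset.univ Finset.univ := by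
    by_contra h; push_neg at h
    exact h2s (fun π' => le_trans (h2b π') h)
  have hs0 := (hprob {0}).2
  have hsU := (hprob Finset.univ).2
  have huniv : (Finset.univ : Finset (Finset (Fin 2))) =
      {∅, {0}, {1}, Finset.univ} := by decide
  have expand : ∀ π : Finset (Fin 2),
      ∑ A : Finset (Fin 2), Pr A π =
      Pr ∅ π + Pr {0} π + Pr {1} π + Pr Finset.univ π := by
    intro π
    rw [huniv, Finset.sum_insert (by decide), Finset.sum_insert (by decide),
      Finset.sum_insert (by decide), Finset.sum_singleton]
    ring
  rw [expand] at hs0 hsU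
  have e1 : Pr ∅ {0} = Pr ∅ Finset.univ :=
    le_antisymm (he1 {0}) (he0 Finset.univ)
  have e2 : Pr {0} {0} = Pr {0} Finset.univ :=
    le_antisymm (h0b {0}) (h0a Finset.univ)
  linarith
end

section
/- On unit-cost instances with exhaustive ground truths, the approval-maximising rule is the MLE of the noise model N_app: let I = ⟨P, c, b⟩ be a unit-cost instance (there is ℓ ≥ 1 with c(p) = ℓ for all p ∈ P and ℓ divides b), with ℓ·|P| ≥ b, and for each feasible allocation π define ℙ(A | π) = 2^{|A ∩ π|} / (2^{|P|−|π|} · 3^{|π|}). Then for every profile A = (A_1, …, A_n), the set of exhaustive allocations π maximizing the likelihood ∏_{i=1}^n ℙ(A_i | π) over all exhaustive allocations equals the set of exhaustive allocations maximizing the total approval score ∑_{i=1}^n |A_i ∩ π| over all exhaustive allocations. -/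
/-- A budget allocation is exhaustive if it is feasible and no further project
can be added without exceeding the budget. -/
def Exhaustive {P : Type*} [DecidableEq P] (c : P → ℕ) (b : ℕ) (π : Finset P) : Prop :=
  ∑ p ∈ π, c p ≤ b ∧ ∀ p ∉ π, ¬ (∑ q ∈ insert p π, c q ≤ b)

lemma exh_card {P : Type*} [Fintype P] [DecidableEq P]
    (c : P → ℕ) (b ℓ : ℕ) (hℓ : 1 ≤ ℓ) (hc : ∀ p, c p = ℓ) (hdvd : ℓ ∣ b)
    (hPb : b ≤ ℓ * Fintype.card P) {π : Finset P}
    (h : (∑ p ∈ π, c p ≤ b ∧ ∀ p ∉ π, ¬ (∑ q ∈ insert p π, c q ≤ b))) :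
    π.card * ℓ = b := by
  obtain ⟨h1, h2⟩ := h
  have hsum : ∑ p ∈ π, c p = π.card * ℓ := by
    simp [hc, Finset.sum_const, mul_comm]
  rw [hsum] at h1
  by_cases hu : π = Finset.univ
  · have : π.card = Fintype.card P := by rw [hu]; simp [Finset.card_univ]
    rw [this] at h1
    rw [this, mul_comm]
    exact le_antisymm (by rw [mul_comm]; exact h1) hPb
  · obtain ⟨p, hp⟩ : ∃ p, p ∉ π := by
      by_contra hcon
      push_neg at hcon
      exact hu (Finset.eq_univ_iff_forall.mpr hcon)
    have h3 := h2 p hp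
    rw [Finset.sum_insert hp, hsum, hc] at h3
    obtain ⟨m, rfl⟩ := hdvd
    push_neg at h3
    have hm1 : m < π.card + 1 := by
      by_contra hcon; push_neg at hcon; nlinarith
    have hm2 : π.card ≤ m := by
      by_contra hcon; push_neg at hcon; nlinarith
    have hme : m = π.card := by omega
    subst hme; ring

lemma prod_form {P : Type*} [DecidableEq P] (π : Finset P) (C : ℝ)
    (A : List (Finset P)) :
    (A.map (fun Ai => (2 : ℝ) ^ (Ai ∩ π).card / C)).prod
      = 2 ^ ((A.map (fun Ai => (Ai ∩ π).card)).sum) / C ^ A.length := by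
  induction A with
  | nil => simp
  | cons a t ih =>
    simp [ih, pow_add, pow_succ]
    ring

/-- On unit-cost instances with exhaustive ground truths, the approval-maximising
rule is the MLE of the noise model `N_app` given by
`ℙ(A | π) = 2 ^ |A ∩ π| / (2 ^ (|P| - |π|) * 3 ^ |π|)`: for every profile, the
exhaustive allocations maximizing the likelihood are exactly the exhaustive
allocations maximizing the total approval score `∑_i |Aᵢ ∩ π|`. -/
theorem app_max_MLE_unit_cost_exhaustive
    {P : Type*} [Fintype P] [DecidableEq P]
    (c : P → ℕ) (b ℓ : ℕ) (hℓ : 1 ≤ ℓ) (hc : ∀ p, c p = ℓ) (hdvd : ℓ ∣ b)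
    (hPb : b ≤ ℓ * Fintype.card P)
    (Pr : Finset P → Finset P → ℝ)
    (hPr : ∀ A π : Finset P,
      Pr A π = (2 ^ (A ∩ π).card : ℝ) / (2 ^ (Fintype.card P - π.card) * 3 ^ π.card)) :
    ∀ A : List (Finset P),
      {π : Finset P | Exhaustive c b π ∧
        ∀ π' : Finset P, Exhaustive c b π' →
          (A.map (fun Ai => Pr Ai π')).prod ≤ (A.map (fun Ai => Pr Ai π)).prod}
      =
      {π : Finset P | Exhaustive c b π ∧
        ∀ π' : Finset P, Exhaustive c b π' →
          (A.map (fun Ai => (Ai ∩ π').card)).sum ≤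
          (A.map (fun Ai => (Ai ∩ π).card)).sum} := by
  intro A
  have hC : ∀ k : ℕ, (0:ℝ) < 2 ^ (Fintype.card P - k) * 3 ^ k := by
    intro k; positivity
  have key : ∀ π π' : Finset P, Exhaustive c b π → Exhaustive c b π' →
      ((A.map (fun Ai => Pr Ai π')).prod ≤ (A.map (fun Ai => Pr Ai π)).prod ↔
       (A.map (fun Ai => (Ai ∩ π').card)).sum ≤ (A.map (fun Ai => (Ai ∩ π).card)).sum) := by
    intro π π' hπ hπ'
    have hcard : π'.card = π.card := by
      have h1 := exh_card c b ℓ hℓ hc hdvd hPb hπ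
      have h2 := exh_card c b ℓ hℓ hc hdvd hPb hπ'
      exact Nat.eq_of_mul_eq_mul_right hℓ (h2.trans h1.symm)
    set C : ℝ := 2 ^ (Fintype.card P - π.card) * 3 ^ π.card with hCdef
    have e1 : (A.map (fun Ai => Pr Ai π)).prod
        = 2 ^ ((A.map (fun Ai => (Ai ∩ π).card)).sum) / C ^ A.length := by
      rw [← prod_form π C A]
      congr 1
      exact List.map_congr_left (fun Ai _ => by rw [hPr])
    have e2 : (A.map (fun Ai => Pr Ai π')).prod
        = 2 ^ ((A.map (fun Ai => (Ai ∩ π').card)).sum) / C ^ A.length := by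
      rw [← prod_form π' C A]
      congr 1
      exact List.map_congr_left (fun Ai _ => by rw [hPr, hcard])
    rw [e1, e2, div_le_div_iff_of_pos_right (by positivity : (0:ℝ) < C ^ A.length)]
    exact pow_le_pow_iff_right₀ one_lt_two
  ext π
  simp only [Set.mem_setOf_eq]
  constructor
  · rintro ⟨h1, h2⟩
    exact ⟨h1, fun π' h' => (key π π' h1 h').mp (h2 π' h')⟩
  · rintro ⟨h1, h2⟩
    exact ⟨h1, fun π' h' => (key π π' h1 h').mpr (h2 π' h')⟩
end

section
/- On unit-cost instances the greedy cost approval rule coincides with approval maximisation over exhaustive allocations: let I = ⟨P, c, b⟩ be a unit-cost instance (there is ℓ ≥ 1 with c(p) = ℓ for all p ∈ P and ℓ divides b) with ℓ·|P| ≥ b. Then for every profile A, the set of allocations returned by the greedy cost approval rule F_greed(I, A) equals the set of exhaustive allocations π maximizing ∑_{p ∈ π} n_p^A over all exhaustive allocations, where n_p^A is the number of ballots in A containing p. -/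
/-- Examine the projects in the order given by the list, selecting each project
whenever the total cost of selected projects stays within the budget. -/
def greedAux {P : Type*} [DecidableEq P] (c : P → ℕ) (b : ℕ) :
    List P → Finset P → Finset P
  | [], sel => sel
  | p :: rest, sel =>
      if ∑ q ∈ insert p sel, c q ≤ b then greedAux c b rest (insert p sel)
      else greedAux c b rest sel

/-- The approval score of project `p` in profile `A`: the number of ballots
containing `p`. -/
def appScore {P : Type*} [DecidableEq P] (A : List (Finset P)) (p : P) : ℕ :=
  A.countP (fun Ai => decide (p ∈ Ai))

/-- The greedy cost approval rule: all allocations obtained by greedily examining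
the projects along some linear order (given as a duplicate-free enumeration of
all projects) that ranks projects with strictly higher approval scores first. -/
def Fgreed {P : Type*} [Fintype P] [DecidableEq P] (c : P → ℕ) (b : ℕ)
    (A : List (Finset P)) : Set (Finset P) :=
  {π : Finset P | ∃ L : List P, L.Nodup ∧ (∀ p, p ∈ L) ∧
    (∀ p p' : P, appScore A p' < appScore A p → L.idxOf p < L.idxOf p') ∧
    π = greedAux c b L ∅}

lemma aux_sum_le_sum_of_card_eq {P : Type*} [DecidableEq P] (f : P → ℕ) (S T : Finset P)
    (hcard : S.card = T.card) (h : ∀ s ∈ S, ∀ t ∈ T, f s ≤ f t) :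
    ∑ s ∈ S, f s ≤ ∑ t ∈ T, f t := by
  rcases T.eq_empty_or_nonempty with rfl | hT
  · have : S = ∅ := Finset.card_eq_zero.mp (by simpa using hcard)
    simp [this]
  · obtain ⟨t0, ht0, hmin⟩ := T.exists_min_image f hT
    calc ∑ s ∈ S, f s ≤ S.card • f t0 :=
          Finset.sum_le_card_nsmul _ _ _ (fun s hs => h s hs t0 ht0)
      _ = T.card • f t0 := by rw [hcard]
      _ ≤ ∑ t ∈ T, f t := Finset.card_nsmul_le_sum _ _ _ hmin

lemma aux_indexOf_lt_of_mem_take {P : Type*} [DecidableEq P] :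
    ∀ (L : List P) (k : ℕ) (p : P), p ∈ L.take k → L.idxOf p < k := by
  intro L
  induction L with
  | nil => simp
  | cons a rest ih =>
    intro k p hp
    cases k with
    | zero => simp at hp
    | succ k =>
      simp only [List.take_succ_cons, List.mem_cons] at hp
      rcases hp with rfl | hp
      · simp
      · by_cases hpa : p = a
        · subst hpa; simp
        · rw [List.idxOf_cons_ne _ (by exact fun h => hpa h.symm)]
          exact Nat.succ_lt_succ (ih k p hp)

lemma aux_mem_take_of_indexOf_lt {P : Type*} [DecidableEq P] :
    ∀ (L : List P) (k : ℕ) (p : P), p ∈ L → L.idxOf p < k → p ∈ L.take k := by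
  intro L
  induction L with
  | nil => simp
  | cons a rest ih =>
    intro k p hp hlt
    by_cases hpa : p = a
    · subst hpa
      cases k with
      | zero => simp at hlt
      | succ k => simp
    · rw [List.idxOf_cons_ne _ (by exact fun h => hpa h.symm)] at hlt
      cases k with
      | zero => omega
      | succ k =>
        have hp' : p ∈ rest := by
          rcases List.mem_cons.mp hp with h | h
          · exact absurd h hpa
          · exact h
        simp only [List.take_succ_cons, List.mem_cons]
        exact Or.inr (ih k p hp' (Nat.lt_of_succ_lt_succ hlt))

lemma aux_indexOf_lt_of_sorted {P : Type*} [DecidableEq P] (key : P → ℕ) (L : List P)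
    (hsort : L.Pairwise (fun a b => key b ≤ key a)) (p q : P)
    (hp : p ∈ L) (hq : q ∈ L) (hkey : key q < key p) :
    L.idxOf p < L.idxOf q := by
  have hip : L.idxOf p < L.length := List.idxOf_lt_length_iff.mpr hp
  have hiq : L.idxOf q < L.length := List.idxOf_lt_length_iff.mpr hq
  rcases lt_trichotomy (L.idxOf p) (L.idxOf q) with h | h | h
  · exact h
  · exfalso
    have : p = q := (List.idxOf_inj hp).mp h
    subst this; omega
  · exfalso
    have := List.pairwise_iff_getElem.mp hsort (L.idxOf q) (L.idxOf p) hiq hip h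
    rw [List.getElem_idxOf hip, List.getElem_idxOf hiq] at this
    omega

lemma aux_greedAux_unit {P : Type*} [DecidableEq P] (c : P → ℕ) (ℓ k : ℕ) (hℓ : 1 ≤ ℓ)
    (hc : ∀ p, c p = ℓ) :
    ∀ (L : List P) (sel : Finset P), L.Nodup → (∀ p ∈ L, p ∉ sel) →
      greedAux c (ℓ * k) L sel = sel ∪ (L.take (k - sel.card)).toFinset := by
  intro L
  induction L with
  | nil => intro sel _ _; simp [greedAux]
  | cons p rest ih =>
    intro sel hnd hdisj
    have hp : p ∉ sel := hdisj p List.mem_cons_self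
    have hsum : ∑ q ∈ insert p sel, c q = ℓ * (sel.card + 1) := by
      rw [Finset.sum_congr rfl (fun q _ => hc q), Finset.sum_const,
        Finset.card_insert_of_notMem hp, smul_eq_mul, mul_comm]
    simp only [greedAux]
    by_cases h : sel.card + 1 ≤ k
    · have hcond : ∑ q ∈ insert p sel, c q ≤ ℓ * k := by
        rw [hsum]; exact Nat.mul_le_mul_left _ h
      rw [if_pos hcond]
      have hdisj' : ∀ q ∈ rest, q ∉ insert p sel := by
        intro q hq
        simp only [Finset.mem_insert, not_or]
        exact ⟨fun hqp => (List.nodup_cons.mp hnd).1 (hqp ▸ hq),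
          hdisj q (List.mem_cons_of_mem _ hq)⟩
      rw [ih (insert p sel) (List.nodup_cons.mp hnd).2 hdisj']
      rw [Finset.card_insert_of_notMem hp]
      have hk : k - sel.card = (k - (sel.card + 1)) + 1 := by omega
      rw [hk, List.take_succ_cons, List.toFinset_cons]
      ext x
      simp only [Finset.mem_union, Finset.mem_insert]
      tauto
    · have hcond : ¬ (∑ q ∈ insert p sel, c q ≤ ℓ * k) := by
        rw [hsum]
        intro hle
        exact h (Nat.le_of_mul_le_mul_left hle (by omega))
      rw [if_neg hcond]
      rw [ih sel (List.nodup_cons.mp hnd).2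
        (fun q hq => hdisj q (List.mem_cons_of_mem _ hq))]
      have hk : k - sel.card = 0 := by omega
      rw [hk]
      simp

/-- On unit-cost instances, the greedy cost approval rule coincides with approval
maximisation over exhaustive allocations. -/
theorem greedy_eq_app_max_unit_cost
    {P : Type*} [Fintype P] [DecidableEq P]
    (c : P → ℕ) (b ℓ : ℕ) (hℓ : 1 ≤ ℓ) (hc : ∀ p, c p = ℓ) (hdvd : ℓ ∣ b)
    (hPb : b ≤ ℓ * Fintype.card P)
    (A : List (Finset P)) :
    Fgreed c b A =
      {π : Finset P | Exhaustive c b π ∧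
        ∀ π' : Finset P, Exhaustive c b π' →
          ∑ p ∈ π', appScore A p ≤ ∑ p ∈ π, appScore A p} := by
  obtain ⟨k, rfl⟩ := hdvd
  have hkP : k ≤ Fintype.card P := Nat.le_of_mul_le_mul_left hPb (by omega)
  have hsumc : ∀ s : Finset P, ∑ p ∈ s, c p = ℓ * s.card := by
    intro s
    rw [Finset.sum_congr rfl (fun q _ => hc q), Finset.sum_const, smul_eq_mul, mul_comm]
  -- characterization of exhaustive
  have hex : ∀ π : Finset P, Exhaustive c (ℓ * k) π ↔ π.card = k := by
    intro π
    constructor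
    · rintro ⟨h1, h2⟩
      rw [hsumc] at h1
      have hle : π.card ≤ k := Nat.le_of_mul_le_mul_left h1 (by omega)
      by_contra hne
      have hlt : π.card < k := lt_of_le_of_ne hle hne
      have hπuniv : π ≠ Finset.univ := by
        intro h; rw [h, Finset.card_univ] at hlt; omega
      obtain ⟨p, hpn⟩ : ∃ p, p ∉ π := by
        by_contra hall
        push_neg at hall
        exact hπuniv (Finset.eq_univ_iff_forall.mpr hall)
      apply h2 p hpn
      rw [hsumc, Finset.card_insert_of_notMem hpn]
      exact Nat.mul_le_mul_left _ (by omega)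
    · intro hcard
      constructor
      · rw [hsumc, hcard]
      · intro p hpn
        rw [hsumc, Finset.card_insert_of_notMem hpn, hcard]
        intro hle
        have := Nat.le_of_mul_le_mul_left hle (by omega)
        omega
  ext π
  simp only [Fgreed, Set.mem_setOf_eq]
  constructor
  · rintro ⟨L, hnd, hmem, hord, rfl⟩
    have hLlen : L.length = Fintype.card P := by
      rw [← Finset.card_univ]
      rw [← List.toFinset_card_of_nodup hnd]
      congr 1
      apply Finset.eq_univ_iff_forall.mpr
      intro p; exact List.mem_toFinset.mpr (hmem p)
    have hgreed : greedAux c (ℓ * k) L ∅ = (L.take k).toFinset := by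
      rw [aux_greedAux_unit c ℓ k hℓ hc L ∅ hnd (fun p _ => Finset.notMem_empty p)]
      simp
    set π := greedAux c (ℓ * k) L ∅ with hπdef
    have hπ : π = (L.take k).toFinset := hgreed
    have hcard : π.card = k := by
      rw [hπ, List.toFinset_card_of_nodup (hnd.sublist (List.take_sublist k L)),
        List.length_take]
      omega
    have hmemπ : ∀ p, p ∈ π ↔ L.idxOf p < k := by
      intro p
      rw [hπ, List.mem_toFinset]
      exact ⟨aux_indexOf_lt_of_mem_take L k p,
        fun h => aux_mem_take_of_indexOf_lt L k p (hmem p) h⟩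
    have hkeyprop : ∀ p ∈ π, ∀ q, q ∉ π → appScore A q ≤ appScore A p := by
      intro p hpπ q hqπ
      by_contra hlt
      push_neg at hlt
      have := hord q p hlt
      have h1 := (hmemπ p).mp hpπ
      have h2 : ¬ L.idxOf q < k := fun h => hqπ ((hmemπ q).mpr h)
      omega
    refine ⟨(hex π).mpr hcard, ?_⟩
    intro π' hπ'
    have hcard' : π'.card = k := (hex π').mp hπ'
    have hsplit : ∑ p ∈ π' ∩ π, appScore A p + ∑ p ∈ π' \ π, appScore A p
        = ∑ p ∈ π', appScore A p := Finset.sum_inter_add_sum_sdiff _ _ _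
    have hsplit2 : ∑ p ∈ π ∩ π', appScore A p + ∑ p ∈ π \ π', appScore A p
        = ∑ p ∈ π, appScore A p := Finset.sum_inter_add_sum_sdiff _ _ _
    have hcd : (π' \ π).card = (π \ π').card := by
      have h1 := Finset.card_inter_add_card_sdiff π' π
      have h2 := Finset.card_inter_add_card_sdiff π π'
      rw [Finset.inter_comm π π'] at h2
      omega
    have hdiff : ∑ p ∈ π' \ π, appScore A p ≤ ∑ p ∈ π \ π', appScore A p := by
      apply aux_sum_le_sum_of_card_eq _ _ _ hcd
      intro s hs t ht
      exact hkeyprop t (Finset.mem_sdiff.mp ht).1 s (Finset.mem_sdiff.mp hs).2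
    rw [← hsplit, ← hsplit2, Finset.inter_comm π π']
    omega
  · rintro ⟨hexh, hmax⟩
    have hcard : π.card = k := (hex π).mp hexh
    -- key property by swapping
    have hkeyprop : ∀ p ∈ π, ∀ q, q ∉ π → appScore A q ≤ appScore A p := by
      intro p hpπ q hqπ
      by_contra hlt
      push_neg at hlt
      set π' := insert q (π.erase p) with hπ'def
      have hqe : q ∉ π.erase p := fun h => hqπ (Finset.mem_of_mem_erase h)
      have hcard' : π'.card = k := by
        rw [hπ'def, Finset.card_insert_of_notMem hqe, Finset.card_erase_of_mem hpπ]
        have : 1 ≤ π.card := Finset.card_pos.mpr ⟨p, hpπ⟩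
        omega
      have hsum' : ∑ x ∈ π', appScore A x
          = appScore A q + ∑ x ∈ π.erase p, appScore A x := Finset.sum_insert hqe
      have hsumπ : appScore A p + ∑ x ∈ π.erase p, appScore A x
          = ∑ x ∈ π, appScore A x := Finset.add_sum_erase _ _ hpπ
      have := hmax π' ((hex π').mpr hcard')
      omega
    -- construct the order
    set key : P → ℕ := fun p => 2 * appScore A p + (if p ∈ π then 1 else 0) with hkeydef
    set le : P → P → Bool := fun p q => decide (key q ≤ key p) with hledef
    set L : List P := Finset.univ.toList.mergeSort le with hLdef
    have hperm : L.Perm Finset.univ.toList := List.mergeSort_perm _ _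
    have hnd : L.Nodup := hperm.nodup_iff.mpr (Finset.nodup_toList _)
    have hmem : ∀ p, p ∈ L := fun p =>
      hperm.mem_iff.mpr (Finset.mem_toList.mpr (Finset.mem_univ p))
    have hsortb : L.Pairwise (fun a b => le a b = true) :=
      List.pairwise_mergeSort
        (by intro a b c' hab hbc; simp only [hledef, decide_eq_true_eq] at *; omega)
        (by intro a b; simp only [hledef, Bool.or_eq_true, decide_eq_true_eq]; omega)
        _
    have hsort : L.Pairwise (fun a b => key b ≤ key a) := by
      refine hsortb.imp ?_
      intro a b hab
      simpa [hledef] using hab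
    have hidx : ∀ p q : P, key q < key p → L.idxOf p < L.idxOf q :=
      fun p q h => aux_indexOf_lt_of_sorted key L hsort p q (hmem p) (hmem q) h
    have hLlen : L.length = Fintype.card P := by
      rw [hperm.length_eq, Finset.length_toList, Finset.card_univ]
    refine ⟨L, hnd, hmem, ?_, ?_⟩
    · intro p p' hsc
      apply hidx
      simp only [hkeydef]
      by_cases h1 : p ∈ π <;> by_cases h2 : p' ∈ π <;> simp [h1, h2] <;> omega
    · rw [aux_greedAux_unit c ℓ k hℓ hc L ∅ hnd (fun p _ => Finset.notMem_empty p)]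
      simp only [Finset.card_empty, Nat.sub_zero, Finset.empty_union]
      -- show π = (L.take k).toFinset
      have hcardtake : (L.take k).toFinset.card = k := by
        rw [List.toFinset_card_of_nodup (hnd.sublist (List.take_sublist k L)),
          List.length_take]
        omega
      apply Finset.eq_of_subset_of_card_le
      · -- π ⊆ take k
        intro p hpπ
        rw [List.mem_toFinset]
        by_contra hpt
        have hkx : ¬ ((L.take k).toFinset ⊆ π) := by
          intro hsub
          have : (L.take k).toFinset = π :=
            Finset.eq_of_subset_of_card_le hsub (by omega)
          exact hpt (List.mem_toFinset.mp (this ▸ hpπ : p ∈ (L.take k).toFinset))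
        obtain ⟨q, hqt, hqπ⟩ := Finset.not_subset.mp hkx
        have hqt' : q ∈ L.take k := List.mem_toFinset.mp hqt
        have hkey : key q < key p := by
          have hle := hkeyprop p hpπ q hqπ
          simp only [hkeydef, if_pos hpπ, if_neg hqπ]
          omega
        have h1 := hidx p q hkey
        have h2 := aux_indexOf_lt_of_mem_take L k q hqt'
        have h3 : p ∈ L.take k :=
          aux_mem_take_of_indexOf_lt L k p (hmem p) (by omega)
        exact hpt h3
      · omega
end

section
/- On unit-cost instances with exhaustive ground truths, the greedy cost approval rule is the MLE of the noise model N_app: let I = ⟨P, c, b⟩ be a unit-cost instance (there is ℓ ≥ 1 with c(p) = ℓ for all p ∈ P and ℓ divides b), with ℓ·|P| ≥ b, and for each feasible allocation π define ℙ(A | π) = 2^{|A ∩ π|} / (2^{|P|−|π|} · 3^{|π|}). Then for every profile A, F_greed(I, A) equals the set of exhaustive allocations π maximizing the likelihood ∏_i ℙ(A_i | π) over all exhaustive allocations. -/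
private lemma sum_unit_cost {P : Type*} [DecidableEq P] {c : P → ℕ} {ℓ : ℕ}
    (hc : ∀ p, c p = ℓ) (s : Finset P) : ∑ p ∈ s, c p = ℓ * s.card := by
  rw [Finset.sum_congr rfl fun p _ => hc p, Finset.sum_const, smul_eq_mul, mul_comm]

private lemma greedAux_unit {P : Type*} [DecidableEq P] {c : P → ℕ} {ℓ : ℕ}
    (hℓ : 1 ≤ ℓ) (hc : ∀ p, c p = ℓ) (k : ℕ) :
    ∀ (L : List P) (sel : Finset P), L.Nodup → (∀ p ∈ L, p ∉ sel) → sel.card ≤ k →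
      greedAux c (ℓ * k) L sel = sel ∪ (L.take (k - sel.card)).toFinset
  | [], sel, _, _, _ => by simp [greedAux]
  | p :: rest, sel, hnd, hdis, hsel => by
    rw [greedAux]
    have hins : ∑ q ∈ insert p sel, c q = ℓ * (sel.card + 1) := by
      rw [sum_unit_cost hc, Finset.card_insert_of_notMem (hdis p (List.mem_cons_self))]
    by_cases hle : sel.card + 1 ≤ k
    · rw [if_pos (by rw [hins]; exact Nat.mul_le_mul le_rfl hle)]
      have hdis' : ∀ q ∈ rest, q ∉ insert p sel := by
        intro q hq
        simp only [Finset.mem_insert, not_or]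
        exact ⟨fun h => (List.nodup_cons.1 hnd).1 (h ▸ hq),
          hdis q (List.mem_cons_of_mem p hq)⟩
      rw [greedAux_unit hℓ hc k rest (insert p sel) (List.nodup_cons.1 hnd).2 hdis'
        (by rw [Finset.card_insert_of_notMem (hdis p (List.mem_cons_self))]; exact hle)]
      rw [Finset.card_insert_of_notMem (hdis p (List.mem_cons_self))]
      obtain ⟨j, hj⟩ : ∃ j, k - sel.card = j + 1 := ⟨k - sel.card - 1, by omega⟩
      have hj' : k - (sel.card + 1) = j := by omega
      rw [hj, hj', List.take_succ_cons, List.toFinset_cons, Finset.union_insert,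
        Finset.insert_union]
    · rw [if_neg (by rw [hins]; intro h; exact hle (Nat.le_of_mul_le_mul_left h hℓ))]
      have hk : k - sel.card = 0 := by omega
      rw [greedAux_unit hℓ hc k rest sel (List.nodup_cons.1 hnd).2
        (fun q hq => hdis q (List.mem_cons_of_mem p hq)) hsel, hk]
      simp

private lemma mem_take_iff_idxOf_lt {P : Type*} [DecidableEq P] {L : List P} {p : P}
    (hp : p ∈ L) (k : ℕ) : p ∈ L.take k ↔ L.idxOf p < k := by
  constructor
  · intro h
    have h2 := List.idxOf_append_of_mem (l₂ := L.drop k) h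
    rw [List.take_append_drop] at h2
    rw [h2]
    exact lt_of_lt_of_le (List.idxOf_lt_length_iff.2 h)
      (by rw [List.length_take]; exact min_le_left _ _)
  · intro h
    by_contra hmem
    rcases le_or_gt L.length k with hlen | hlen
    · rw [List.take_of_length_le hlen] at hmem; exact hmem hp
    · have h2 := List.idxOf_append_of_notMem (l₂ := L.drop k) hmem (a := p)
      rw [List.take_append_drop] at h2
      rw [h2, List.length_take] at h
      omega

private lemma sorted_idxOf_lt {P : Type*} [DecidableEq P] {s : P → ℕ} {l : List P}
    (hl : l.Pairwise (fun a b => s b ≤ s a)) {p p' : P} (hp : p ∈ l) (hp' : p' ∈ l)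
    (h : s p' < s p) : l.idxOf p < l.idxOf p' := by
  by_contra hle
  push_neg at hle
  have hip : l.idxOf p < l.length := List.idxOf_lt_length_iff.2 hp
  have hip' : l.idxOf p' < l.length := List.idxOf_lt_length_iff.2 hp'
  rcases lt_or_eq_of_le hle with hlt | heq
  · have h3 := hl.rel_get_of_lt (a := ⟨l.idxOf p', hip'⟩) (b := ⟨l.idxOf p, hip⟩)
      (by exact hlt)
    rw [List.idxOf_get, List.idxOf_get] at h3
    omega
  · have : p' = p := by
      rw [← List.idxOf_get hip', ← List.idxOf_get hip]
      congr 1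
      exact Fin.ext heq
    subst this
    omega

private lemma sum_appScore {P : Type*} [DecidableEq P] (π : Finset P) :
    ∀ A : List (Finset P),
      ∑ p ∈ π, appScore A p = (A.map fun Ai => (Ai ∩ π).card).sum
  | [] => by simp [appScore]
  | Ai :: A => by
    have h1 : ∀ p, appScore (Ai :: A) p = appScore A p + (if p ∈ Ai then 1 else 0) := by
      intro p; simp [appScore, List.countP_cons]
    have h2 : (Ai ∩ π).card = ∑ p ∈ π, (if p ∈ Ai then 1 else 0) := by
      rw [← Finset.card_filter, Finset.filter_mem_eq_inter, Finset.inter_comm]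
    simp only [h1, Finset.sum_add_distrib, sum_appScore π A, List.map_cons, List.sum_cons, h2]
    omega

private lemma prod_formula {P : Type*} [DecidableEq P] (Pr : Finset P → Finset P → ℝ)
    (D : ℝ) (π : Finset P) (hPr : ∀ B, Pr B π = (2 ^ (B ∩ π).card : ℝ) / D) :
    ∀ A : List (Finset P),
      (A.map fun Ai => Pr Ai π).prod
        = 2 ^ ((A.map fun Ai => (Ai ∩ π).card).sum) * (1 / D) ^ A.length
  | [] => by simp
  | Ai :: A => by
    simp only [List.map_cons, List.prod_cons, List.sum_cons, List.length_cons,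
      prod_formula Pr D π hPr A, hPr Ai, pow_add, pow_succ]
    ring

private lemma threshold_max {P : Type*} [DecidableEq P] (s : P → ℕ)
    {π π' : Finset P} (hcard : π'.card = π.card)
    (hthr : ∀ p ∈ π, ∀ p' ∉ π, s p' ≤ s p) :
    ∑ p ∈ π', s p ≤ ∑ p ∈ π, s p := by
  by_cases hpp : π' = π
  · subst hpp; exact le_rfl
  · have hne : (π \ π').Nonempty := by
      rw [Finset.sdiff_nonempty]
      intro hsub
      exact hpp (Finset.eq_of_subset_of_card_le hsub (le_of_eq hcard)).symm
    have h1 : ∑ p ∈ π' \ π, s p ≤ (π' \ π).card • ((π \ π').inf' hne s) :=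
      Finset.sum_le_card_nsmul _ _ _ fun p' hp' => Finset.le_inf' hne _ fun q hq =>
        hthr q (Finset.mem_sdiff.1 hq).1 p' (Finset.mem_sdiff.1 hp').2
    have h2 : (π \ π').card • ((π \ π').inf' hne s) ≤ ∑ p ∈ π \ π', s p :=
      Finset.card_nsmul_le_sum _ _ _ fun q hq => Finset.inf'_le _ hq
    have hc2 : (π' \ π).card = (π \ π').card := by
      have e1 := Finset.card_sdiff_add_card_inter π' π
      have e2 := Finset.card_sdiff_add_card_inter π π'
      rw [Finset.inter_comm] at e2
      omega
    calc ∑ p ∈ π', s p = ∑ p ∈ π' ∩ π, s p + ∑ p ∈ π' \ π, s p :=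
          (Finset.sum_inter_add_sum_sdiff _ _ _).symm
      _ ≤ ∑ p ∈ π' ∩ π, s p + ∑ p ∈ π \ π', s p :=
          add_le_add_right (h1.trans (hc2 ▸ h2)) _
      _ = ∑ p ∈ π, s p := by
          rw [Finset.inter_comm]; exact Finset.sum_inter_add_sum_sdiff _ _ _

/-- On unit-cost instances with exhaustive ground truths, the greedy cost approval
rule is the MLE of the noise model `N_app` given by
`ℙ(A | π) = 2 ^ |A ∩ π| / (2 ^ (|P| - |π|) * 3 ^ |π|)`. -/
theorem greedy_MLE_unit_cost_exhaustive
    {P : Type*} [Fintype P] [DecidableEq P]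
    (c : P → ℕ) (b ℓ : ℕ) (hℓ : 1 ≤ ℓ) (hc : ∀ p, c p = ℓ) (hdvd : ℓ ∣ b)
    (hPb : b ≤ ℓ * Fintype.card P)
    (Pr : Finset P → Finset P → ℝ)
    (hPr : ∀ A π : Finset P,
      Pr A π = (2 ^ (A ∩ π).card : ℝ) / (2 ^ (Fintype.card P - π.card) * 3 ^ π.card)) :
    ∀ A : List (Finset P),
      Fgreed c b A =
        {π : Finset P | Exhaustive c b π ∧
          ∀ π' : Finset P, Exhaustive c b π' →
            (A.map (fun Ai => Pr Ai π')).prod ≤ (A.map (fun Ai => Pr Ai π)).prod} := by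
  intro A
  obtain ⟨k, rfl⟩ : ∃ k, b = ℓ * k := ⟨b / ℓ, (Nat.mul_div_cancel' hdvd).symm⟩
  have hℓ0 : 0 < ℓ := hℓ
  have hkn : k ≤ Fintype.card P := Nat.le_of_mul_le_mul_left hPb hℓ0
  -- exhaustive ↔ card = k
  have hexh : ∀ π : Finset P, Exhaustive c (ℓ * k) π ↔ π.card = k := by
    intro π
    constructor
    · rintro ⟨h1, h2⟩
      rw [sum_unit_cost hc] at h1
      have hle : π.card ≤ k := Nat.le_of_mul_le_mul_left h1 hℓ0
      by_contra hne
      have hlt : π.card < k := lt_of_le_of_ne hle hne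
      obtain ⟨p, hp⟩ : ∃ p, p ∉ π := by
        by_contra hall
        push_neg at hall
        rw [Finset.eq_univ_iff_forall.2 hall, Finset.card_univ] at hlt
        omega
      refine h2 p hp ?_
      rw [sum_unit_cost hc, Finset.card_insert_of_notMem hp]
      exact Nat.mul_le_mul le_rfl (by omega)
    · intro h
      refine ⟨by rw [sum_unit_cost hc, h], fun p hp hcost => ?_⟩
      rw [sum_unit_cost hc, Finset.card_insert_of_notMem hp, h] at hcost
      have := Nat.le_of_mul_le_mul_left hcost hℓ0
      omega
  -- likelihood comparison ↔ score-sum comparison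
  have hlike : ∀ π π' : Finset P, π.card = k → π'.card = k →
      ((A.map fun Ai => Pr Ai π').prod ≤ (A.map fun Ai => Pr Ai π).prod ↔
        ∑ p ∈ π', appScore A p ≤ ∑ p ∈ π, appScore A p) := by
    intro π π' h h'
    have hD0 : (0:ℝ) < 2 ^ (Fintype.card P - k) * 3 ^ k := by positivity
    rw [prod_formula Pr _ π (fun B => by rw [hPr, h]) A,
      prod_formula Pr _ π' (fun B => by rw [hPr, h']) A,
      ← sum_appScore, ← sum_appScore,
      mul_le_mul_iff_of_pos_right (by positivity)]
    exact pow_le_pow_iff_right₀ one_lt_two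
  ext π
  simp only [Set.mem_setOf_eq, hexh]
  constructor
  · rintro ⟨L, hnd, hfull, hcomp, rfl⟩
    have hLlen : L.length = Fintype.card P := by
      rw [← List.toFinset_card_of_nodup hnd]
      congr 1
      apply Finset.eq_univ_iff_forall.2
      intro p; exact List.mem_toFinset.2 (hfull p)
    have hgreed := greedAux_unit hℓ hc k L ∅ hnd (by simp) (Nat.zero_le _)
    rw [Finset.card_empty, Nat.sub_zero, Finset.empty_union] at hgreed
    have hcard : (greedAux c (ℓ * k) L ∅).card = k := by
      rw [hgreed, List.toFinset_card_of_nodup (hnd.sublist (List.take_sublist k L)),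
        List.length_take, hLlen]
      omega
    have hthr : ∀ p ∈ greedAux c (ℓ * k) L ∅, ∀ p' ∉ greedAux c (ℓ * k) L ∅,
        appScore A p' ≤ appScore A p := by
      intro p hp p' hp'
      rw [hgreed, List.mem_toFinset] at hp hp'
      by_contra hlt
      push_neg at hlt
      have h1 := hcomp p' p hlt
      have h2 := (mem_take_iff_idxOf_lt (hfull p) k).1 hp
      have h3 : ¬ L.idxOf p' < k := fun h => hp' ((mem_take_iff_idxOf_lt (hfull p') k).2 h)
      omega
    exact ⟨hcard, fun π' h' => (hlike _ _ hcard h').2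
      (threshold_max _ (h'.trans hcard.symm) hthr)⟩
  · rintro ⟨hcard, hmax⟩
    have hsum : ∀ π' : Finset P, π'.card = k →
        ∑ p ∈ π', appScore A p ≤ ∑ p ∈ π, appScore A p :=
      fun π' h' => (hlike π π' hcard h').1 (hmax π' h')
    have hthr : ∀ p ∈ π, ∀ p' ∉ π, appScore A p' ≤ appScore A p := by
      intro p hp p' hp'
      by_contra hlt
      push_neg at hlt
      have hk1 : 1 ≤ k := hcard ▸ Finset.card_pos.2 ⟨p, hp⟩
      have hni : p' ∉ π.erase p := fun h => hp' (Finset.mem_of_mem_erase h)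
      have hc' : (insert p' (π.erase p)).card = k := by
        rw [Finset.card_insert_of_notMem hni, Finset.card_erase_of_mem hp, hcard]
        omega
      have hs := hsum _ hc'
      rw [Finset.sum_insert hni] at hs
      have he : appScore A p + ∑ q ∈ π.erase p, appScore A q = ∑ q ∈ π, appScore A q :=
        Finset.add_sum_erase _ _ hp
      omega
    -- construct the sorted list
    haveI : IsTotal P (fun a b => appScore A b ≤ appScore A a) :=
      ⟨fun a b => le_total _ _⟩
    haveI : IsTrans P (fun a b => appScore A b ≤ appScore A a) :=
      ⟨fun a b c h1 h2 => le_trans h2 h1⟩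
    set r : P → P → Prop := fun a b => appScore A b ≤ appScore A a with hr
    let l1 := List.insertionSort r π.toList
    let l2 := List.insertionSort r πᶜ.toList
    have hm1 : ∀ a, a ∈ l1 ↔ a ∈ π := fun a =>
      ((List.perm_insertionSort r _).mem_iff).trans (Finset.mem_toList)
    have hm2 : ∀ a, a ∈ l2 ↔ a ∉ π := fun a =>
      ((List.perm_insertionSort r _).mem_iff).trans
        (by rw [Finset.mem_toList, Finset.mem_compl])
    have hnd1 : l1.Nodup := ((List.perm_insertionSort r _).nodup_iff).2 π.nodup_toList
    have hnd2 : l2.Nodup := ((List.perm_insertionSort r _).nodup_iff).2 πᶜ.nodup_toList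
    have hlen1 : l1.length = k := by
      rw [(List.perm_insertionSort r _).length_eq, Finset.length_toList, hcard]
    refine ⟨l1 ++ l2, ?_, ?_, ?_, ?_⟩
    · rw [List.nodup_append]
      exact ⟨hnd1, hnd2, fun a ha b hb hab => (hm2 a).1 (hab ▸ hb) ((hm1 a).1 ha)⟩
    · intro p
      by_cases h : p ∈ π
      · exact List.mem_append_left _ ((hm1 p).2 h)
      · exact List.mem_append_right _ ((hm2 p).2 h)
    · intro p p' hlt
      by_cases h1 : p ∈ π <;> by_cases h2 : p' ∈ π
      · rw [List.idxOf_append_of_mem ((hm1 p).2 h1),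
          List.idxOf_append_of_mem ((hm1 p').2 h2)]
        exact sorted_idxOf_lt (List.pairwise_insertionSort r _) ((hm1 p).2 h1)
          ((hm1 p').2 h2) hlt
      · rw [List.idxOf_append_of_mem ((hm1 p).2 h1),
          List.idxOf_append_of_notMem (fun h => h2 ((hm1 p').1 h))]
        exact lt_of_lt_of_le (List.idxOf_lt_length_iff.2 ((hm1 p).2 h1))
          (Nat.le_add_right _ _)
      · exact absurd (hthr p' h2 p h1) (by omega)
      · rw [List.idxOf_append_of_notMem (fun h => h1 ((hm1 p).1 h)),
          List.idxOf_append_of_notMem (fun h => h2 ((hm1 p').1 h))]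
        exact Nat.add_lt_add_left (sorted_idxOf_lt (List.pairwise_insertionSort r _)
          ((hm2 p).2 h1) ((hm2 p').2 h2) hlt) _
    · rw [greedAux_unit hℓ hc k _ ∅ (by
          rw [List.nodup_append]
          exact ⟨hnd1, hnd2, fun a ha b hb hab => (hm2 a).1 (hab ▸ hb) ((hm1 a).1 ha)⟩)
        (by simp) (Nat.zero_le _)]
      rw [Finset.card_empty, Nat.sub_zero, Finset.empty_union, ← hlen1, List.take_left]
      ext a
      rw [List.mem_toFinset, hm1 a]
end

section
/- The greedy cost approval rule fails weak reinforcement: let I be the instance with projects p1, p2, p3 of costs c(p1) = 2, c(p2) = 2, c(p3) = 3 and budget b = 4, let A be the profile consisting of 10 ballots {p1}, 1 ballot {p2}, and 9 ballots {p3}, and let A' be the profile consisting of 1 ballot {p1}, 10 ballots {p2}, and 9 ballots {p3}. Then F_greed(I, A) = F_greed(I, A') = {{p1, p2}}, but F_greed(I, A ++ A') = {{p3}} ≠ {{p1, p2}}; hence F_greed violates weak reinforcement. -/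
lemma perm3 (L : List (Fin 3)) (hn : L.Nodup) (hm : ∀ p, p ∈ L) :
    L = [0,1,2] ∨ L = [0,2,1] ∨ L = [1,0,2] ∨ L = [1,2,0] ∨ L = [2,0,1] ∨ L = [2,1,0] := by
  have hlen : L.length = 3 := by
    have h1 : L.toFinset = Finset.univ := Finset.eq_univ_iff_forall.2 (by simpa using hm)
    have h2 := congrArg Finset.card h1
    rw [List.toFinset_card_of_nodup hn] at h2
    simpa using h2
  rcases L with _ | ⟨a, _ | ⟨b, _ | ⟨c, _ | ⟨d, t⟩⟩⟩⟩ <;> simp at hlen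
  fin_cases a <;> fin_cases b <;> fin_cases c <;> simp_all

lemma Fgreed_eq (c : Fin 3 → ℕ) (b : ℕ) (A : List (Finset (Fin 3))) (X : Finset (Fin 3))
    (h : ∀ L ∈ [[0,1,2],[0,2,1],[1,0,2],[1,2,0],[2,0,1],[2,1,0]],
      ((∀ p p' : Fin 3, appScore A p' < appScore A p → L.idxOf p < L.idxOf p') →
        greedAux c b L ∅ = X))
    (L₀ : List (Fin 3)) (hn : L₀.Nodup) (hm : ∀ p, p ∈ L₀)
    (hord : ∀ p p' : Fin 3, appScore A p' < appScore A p → L₀.idxOf p < L₀.idxOf p') :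
    Fgreed c b A = {X} := by
  ext π
  simp only [Set.mem_singleton_iff, Fgreed, Set.mem_setOf_eq]
  constructor
  · rintro ⟨L, hn', hm', hord', rfl⟩
    rcases perm3 L hn' hm' with rfl | rfl | rfl | rfl | rfl | rfl <;>
      exact h _ (by simp) hord'
  · rintro rfl
    refine ⟨L₀, hn, hm, hord, ?_⟩
    rcases perm3 L₀ hn hm with rfl | rfl | rfl | rfl | rfl | rfl <;>
      exact (h _ (by simp) hord).symm

/-- The greedy cost approval rule fails weak reinforcement: on the instance with
projects `p1, p2, p3` of costs `2, 2, 3` and budget `4`, with profile `A`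
consisting of 10 ballots `{p1}`, 1 ballot `{p2}` and 9 ballots `{p3}`, and
profile `A'` consisting of 1 ballot `{p1}`, 10 ballots `{p2}` and 9 ballots
`{p3}`, the rule returns `{{p1, p2}}` on both `A` and `A'`, but `{{p3}}` on the
concatenated profile. -/
theorem greedy_fails_weak_reinforcement :
    let c : Fin 3 → ℕ := ![2, 2, 3]
    let A : List (Finset (Fin 3)) :=
      List.replicate 10 {0} ++ List.replicate 1 {1} ++ List.replicate 9 {2}
    let A' : List (Finset (Fin 3)) :=
      List.replicate 1 {0} ++ List.replicate 10 {1} ++ List.replicate 9 {2}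
    Fgreed c 4 A = {({0, 1} : Finset (Fin 3))} ∧
    Fgreed c 4 A' = {({0, 1} : Finset (Fin 3))} ∧
    Fgreed c 4 (A ++ A') = {({2} : Finset (Fin 3))} ∧
    ({({2} : Finset (Fin 3))} : Set (Finset (Fin 3))) ≠ {({0, 1} : Finset (Fin 3))} := by
  refine ⟨?_, ?_, ?_, ?_⟩
  · exact Fgreed_eq _ _ _ _ (by decide) [0,2,1] (by decide) (by decide) (by decide)
  · exact Fgreed_eq _ _ _ _ (by decide) [1,2,0] (by decide) (by decide) (by decide)
  · exact Fgreed_eq _ _ _ _ (by decide) [2,0,1] (by decide) (by decide) (by decide)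
  · intro h
    have : ({2} : Finset (Fin 3)) = {0, 1} := by
      simpa using congrArg (fun s => ({2} : Finset (Fin 3)) ∈ s) h
    exact absurd this (by decide)
end
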